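/- There exist r > 0 and C > 0 (depending on n, s₀, T and the coefficients a^{jk}) such that for every λ ≥ 1, every t ∈ [0,T] and every x with 0 < |x| ≤ r one has |Ψ(t,x)| ≤ C·λ·w(x,t)^{−2}. -/

import Mathlib

set_option maxHeartbeats 1000000
set_option synthInstance.maxHeartbeats 400000


open Set

/- The radial weight profile: `F s = ∫₀^s (e^{-u} - 1)/u du` (integrand extended
continuously by `-1` at `u = 0`), and `φ s = s · exp (F s)`. -/

noncomputable def Fwt (s : ℝ) : ℝ :=
  ∫ u in (0:ℝ)..s, if u = 0 then (-1 : ℝ) else (Real.exp (-u) - 1) / u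

noncomputable def phiw (s : ℝ) : ℝ := s * Real.exp (Fwt s)

/-- `σ(x,t)`: the distance from `x` to the origin in the metric `(a^{jk}(t,0))`. -/
noncomputable def sigw {n : ℕ} (a : Fin n → Fin n → ℝ → EuclideanSpace ℝ (Fin n) → ℝ)
    (x : EuclideanSpace ℝ (Fin n)) (t : ℝ) : ℝ :=
  Real.sqrt (∑ j, ∑ k, a j k t 0 * x j * x k)

/-- The Carleman weight `w(x,t) = φ(σ(x,t))`. -/
noncomputable def ww {n : ℕ} (a : Fin n → Fin n → ℝ → EuclideanSpace ℝ (Fin n) → ℝ)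
    (x : EuclideanSpace ℝ (Fin n)) (t : ℝ) : ℝ :=
  phiw (sigw a x t)

/-- Partial derivative in the `i`-th coordinate direction. -/
noncomputable def pd {n : ℕ} (f : EuclideanSpace ℝ (Fin n) → ℝ) (i : Fin n)
    (x : EuclideanSpace ℝ (Fin n)) : ℝ :=
  fderiv ℝ f x (EuclideanSpace.single i 1)

/-- `ℓ(t,x) = -λ ln w(x,t)`. -/
noncomputable def lw {n : ℕ} (a : Fin n → Fin n → ℝ → EuclideanSpace ℝ (Fin n) → ℝ)
    (lam t : ℝ) (x : EuclideanSpace ℝ (Fin n)) : ℝ :=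
  -lam * Real.log (ww a x t)

/-- `Ψ = 2 Σ_{j,k} (a^{jk} ℓ_{x_j})_{x_k}`. -/
noncomputable def Psiw {n : ℕ} (a : Fin n → Fin n → ℝ → EuclideanSpace ℝ (Fin n) → ℝ)
    (lam t : ℝ) (x : EuclideanSpace ℝ (Fin n)) : ℝ :=
  2 * ∑ j, ∑ k, pd (fun y => a j k t y * pd (lw a lam t) j y) k x

/-- `𝒜 = -Σ_{j,k} [a^{jk} ℓ_{x_j} ℓ_{x_k} + (a^{jk} ℓ_{x_j})_{x_k}] - ℓ_t`. -/
noncomputable def Aw {n : ℕ} (a : Fin n → Fin n → ℝ → EuclideanSpace ℝ (Fin n) → ℝ)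
    (lam t : ℝ) (x : EuclideanSpace ℝ (Fin n)) : ℝ :=
  -(∑ j, ∑ k, (a j k t x * pd (lw a lam t) j x * pd (lw a lam t) k x
      + pd (fun y => a j k t y * pd (lw a lam t) j y) k x))
    - deriv (fun s => lw a lam s x) t

/-- `c^{jk} = Σ_{j',k'}[2 a^{jk'}(a^{j'k} ℓ_{x_{j'}})_{x_{k'}} - (a^{jk} a^{j'k'} ℓ_{x_{j'}})_{x_{k'}}]
  - (1/2) ∂ₜ a^{jk} + Ψ a^{jk}`. -/
noncomputable def cw {n : ℕ} (a : Fin n → Fin n → ℝ → EuclideanSpace ℝ (Fin n) → ℝ)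
    (lam t : ℝ) (j k : Fin n) (x : EuclideanSpace ℝ (Fin n)) : ℝ :=
  (∑ j', ∑ k', (2 * a j k' t x * pd (fun y => a j' k t y * pd (lw a lam t) j' y) k' x
      - pd (fun y => a j k t y * a j' k' t y * pd (lw a lam t) j' y) k' x))
    - deriv (fun s => a j k s x) t / 2 + Psiw a lam t x * a j k t x

/-- `ℬ = 2[𝒜 Ψ - Σ_{j,k} (𝒜 a^{jk} ℓ_{x_j})_{x_k}] - ∂ₜ 𝒜 - Σ_{j,k} (a^{jk} Ψ_{x_k})_{x_j}`. -/
noncomputable def Bw {n : ℕ} (a : Fin n → Fin n → ℝ → EuclideanSpace ℝ (Fin n) → ℝ)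
    (lam t : ℝ) (x : EuclideanSpace ℝ (Fin n)) : ℝ :=
  2 * (Aw a lam t x * Psiw a lam t x
      - ∑ j, ∑ k, pd (fun y => Aw a lam t y * a j k t y * pd (lw a lam t) j y) k x)
    - deriv (fun s => Aw a lam s x) t
    - ∑ j, ∑ k, pd (fun y => a j k t y * pd (Psiw a lam t) k y) j x

/-- The spatial Laplacian. -/
noncomputable def lapl {n : ℕ} (f : EuclideanSpace ℝ (Fin n) → ℝ)
    (x : EuclideanSpace ℝ (Fin n)) : ℝ :=
  ∑ i, fderiv ℝ (fun y => fderiv ℝ f y (EuclideanSpace.single i 1)) x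
    (EuclideanSpace.single i 1)




noncomputable def gwt (u : ℝ) : ℝ := if u = 0 then (-1 : ℝ) else (Real.exp (-u) - 1) / u

lemma gwt_cont : Continuous gwt := by
  rw [continuous_iff_continuousAt]
  intro x
  rcases eq_or_ne x 0 with rfl | hx
  · have hd : HasDerivAt (fun u : ℝ => Real.exp (-u)) (-1) 0 := by
      simpa [Function.comp_def] using ((Real.hasDerivAt_exp (-0)).comp 0 ((hasDerivAt_id (0:ℝ)).neg))
    have hs := hasDerivAt_iff_tendsto_slope.mp hd
    have hs' : Filter.Tendsto gwt (nhdsWithin 0 {(0:ℝ)}ᶜ) (nhds (-1)) := by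
      refine hs.congr' ?_
      filter_upwards [self_mem_nhdsWithin] with u hu
      simp only [Set.mem_compl_iff, Set.mem_singleton_iff] at hu
      simp [slope, gwt, hu, Real.exp_zero, div_eq_inv_mul, sub_zero, vsub_eq_sub]
    have : Filter.Tendsto gwt (nhds 0) (nhds (-1)) := by
      rw [← nhdsNE_sup_pure 0]
      refine Filter.Tendsto.sup hs' ?_
      simpa [gwt] using (tendsto_pure_nhds gwt 0)
    simpa [ContinuousAt, gwt] using this
  · have : ContinuousAt (fun u : ℝ => (Real.exp (-u) - 1) / u) x := by
      exact (((Real.continuous_exp.comp continuous_neg).sub continuous_const).continuousAt).div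
        continuousAt_id hx
    refine this.congr ?_
    filter_upwards [isOpen_ne.mem_nhds hx] with u hu
    simp [gwt, hu]

lemma Fwt_hasDerivAt (s : ℝ) : HasDerivAt Fwt (gwt s) s := by
  have := intervalIntegral.integral_hasDerivAt_right
    (gwt_cont.intervalIntegrable 0 s)
    (gwt_cont.stronglyMeasurableAtFilter _ _)
    gwt_cont.continuousAt
  have h2 : Fwt = fun u => ∫ x in (0:ℝ)..u, gwt x := rfl
  rw [h2]; exact this

lemma Fwt_nonpos {s : ℝ} (hs : 0 ≤ s) : Fwt s ≤ 0 := by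
  have : ∀ u ∈ Set.Icc (0:ℝ) s, gwt u ≤ 0 := by
    intro u hu
    rcases eq_or_ne u 0 with rfl | h0
    · simp [gwt]
    · have hu0 : 0 < u := lt_of_le_of_ne hu.1 (Ne.symm h0)
      have : Real.exp (-u) ≤ 1 := by
        simpa using Real.exp_le_exp.mpr (by linarith : -u ≤ 0)
      simp only [gwt, h0, if_false]
      exact div_nonpos_iff.mpr (Or.inr ⟨by linarith, hu0.le⟩)
  have h := intervalIntegral.integral_nonneg (f := fun u => -gwt u) (μ := MeasureTheory.volume) hs
    (fun u hu => by simpa using this u hu)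
  rw [intervalIntegral.integral_neg] at h
  have : (0:ℝ) ≤ -Fwt s := by simpa [Fwt, gwt] using h
  linarith


variable {n : ℕ}

noncomputable def Qc (c : Fin n → Fin n → ℝ) (y : EuclideanSpace ℝ (Fin n)) : ℝ :=
  ∑ j, ∑ k, c j k * y j * y k

noncomputable def QD (c : Fin n → Fin n → ℝ) (y : EuclideanSpace ℝ (Fin n)) :
    EuclideanSpace ℝ (Fin n) →L[ℝ] ℝ :=
  ∑ j, ∑ k, ((c j k * y k) • (EuclideanSpace.proj j : EuclideanSpace ℝ (Fin n) →L[ℝ] ℝ)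
    + (c j k * y j) • (EuclideanSpace.proj k : EuclideanSpace ℝ (Fin n) →L[ℝ] ℝ))

lemma hasFDerivAt_Qc (c : Fin n → Fin n → ℝ) (y : EuclideanSpace ℝ (Fin n)) :
    HasFDerivAt (Qc c) (QD c y) y := by
  unfold Qc QD
  apply HasFDerivAt.fun_sum
  intro j _
  apply HasFDerivAt.fun_sum
  intro k _
  have hj : HasFDerivAt (fun y : EuclideanSpace ℝ (Fin n) => y j)
      (EuclideanSpace.proj j : EuclideanSpace ℝ (Fin n) →L[ℝ] ℝ) y := by
    have := ((EuclideanSpace.proj j : EuclideanSpace ℝ (Fin n) →L[ℝ] ℝ)).hasFDerivAt (x := y)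
    refine this.congr_of_eventuallyEq (Filter.Eventually.of_forall fun z => ?_)
    simp
  have hk : HasFDerivAt (fun y : EuclideanSpace ℝ (Fin n) => y k)
      (EuclideanSpace.proj k : EuclideanSpace ℝ (Fin n) →L[ℝ] ℝ) y := by
    have := ((EuclideanSpace.proj k : EuclideanSpace ℝ (Fin n) →L[ℝ] ℝ)).hasFDerivAt (x := y)
    refine this.congr_of_eventuallyEq (Filter.Eventually.of_forall fun z => ?_)
    simp
  have := (hj.const_mul (c j k)).mul hk
  refine this.congr_fderiv ?_
  ext v
  simp [ContinuousLinearMap.smul_apply]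
  ring

lemma QD_apply (c : Fin n → Fin n → ℝ) (y v : EuclideanSpace ℝ (Fin n)) :
    QD c y v = ∑ j, ∑ k, (c j k * y k * v j + c j k * y j * v k) := by
  simp [QD, ContinuousLinearMap.sum_apply]

lemma coord_le_norm (y : EuclideanSpace ℝ (Fin n)) (i : Fin n) : |y i| ≤ ‖y‖ := by
  rw [EuclideanSpace.norm_eq]
  rw [← Real.sqrt_sq_eq_abs]
  apply Real.sqrt_le_sqrt
  have : (y i)^2 ≤ ∑ j, ‖y j‖^2 := by
    refine Finset.single_le_sum (f := fun j => ‖y j‖^2) (fun j _ => by positivity) (Finset.mem_univ i) |>.trans_eq' ?_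
    simp [sq_abs]
  simpa using this

lemma Qc_le (c : Fin n → Fin n → ℝ) (M : ℝ) (hM : ∀ j k, |c j k| ≤ M)
    (y : EuclideanSpace ℝ (Fin n)) : |Qc c y| ≤ n^2 * M * ‖y‖^2 := by
  have : |Qc c y| ≤ ∑ j, ∑ k, |c j k * y j * y k| := by
    refine (Finset.abs_sum_le_sum_abs _ _).trans ?_
    exact Finset.sum_le_sum fun j _ => Finset.abs_sum_le_sum_abs _ _
  refine this.trans ?_
  have hterm : ∀ j k : Fin n, |c j k * y j * y k| ≤ M * ‖y‖^2 := by
    intro j k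
    rw [abs_mul, abs_mul]
    calc |c j k| * |y j| * |y k| ≤ M * ‖y‖ * ‖y‖ := by
          apply mul_le_mul
          apply mul_le_mul (hM j k) (coord_le_norm y j) (abs_nonneg _)
          exact (abs_nonneg _).trans (hM j k)
          exact coord_le_norm y k
          exact abs_nonneg _
          exact mul_nonneg ((abs_nonneg _).trans (hM j k)) (norm_nonneg _)
      _ = M * ‖y‖^2 := by ring
  calc (∑ j, ∑ k, |c j k * y j * y k|) ≤ ∑ j : Fin n, ∑ k : Fin n, M * ‖y‖^2 :=
        Finset.sum_le_sum fun j _ => Finset.sum_le_sum fun k _ => hterm j k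
    _ = n^2 * M * ‖y‖^2 := by simp [Finset.sum_const]; ring

lemma QD_norm_le (c : Fin n → Fin n → ℝ) (M : ℝ) (hM : ∀ j k, |c j k| ≤ M)
    (hM0 : 0 ≤ M) (y : EuclideanSpace ℝ (Fin n)) : ‖QD c y‖ ≤ 2 * n^2 * M * ‖y‖ := by
  refine ContinuousLinearMap.opNorm_le_bound _
    (mul_nonneg (mul_nonneg (by positivity) hM0) (norm_nonneg _)) fun v => ?_
  rw [QD_apply]
  have hterm : ∀ j k : Fin n, |c j k * y k * v j + c j k * y j * v k| ≤ 2 * M * ‖y‖ * ‖v‖ := by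
    intro j k
    refine (abs_add_le _ _).trans ?_
    rw [abs_mul, abs_mul, abs_mul, abs_mul]
    have h1 : |c j k| * |y k| * |v j| ≤ M * ‖y‖ * ‖v‖ := by
      apply mul_le_mul _ (coord_le_norm v j) (abs_nonneg _) (mul_nonneg hM0 (norm_nonneg _))
      apply mul_le_mul (hM j k) (coord_le_norm y k) (abs_nonneg _) hM0
    have h2 : |c j k| * |y j| * |v k| ≤ M * ‖y‖ * ‖v‖ := by
      apply mul_le_mul _ (coord_le_norm v k) (abs_nonneg _) (mul_nonneg hM0 (norm_nonneg _))
      apply mul_le_mul (hM j k) (coord_le_norm y j) (abs_nonneg _) hM0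
    linarith
  calc ‖∑ j, ∑ k, (c j k * y k * v j + c j k * y j * v k)‖
      ≤ ∑ j, ∑ k, |c j k * y k * v j + c j k * y j * v k| := by
        refine (Finset.abs_sum_le_sum_abs _ _).trans ?_
        exact Finset.sum_le_sum fun j _ => Finset.abs_sum_le_sum_abs _ _
    _ ≤ ∑ j : Fin n, ∑ k : Fin n, 2 * M * ‖y‖ * ‖v‖ :=
        Finset.sum_le_sum fun j _ => Finset.sum_le_sum fun k _ => hterm j k
    _ = 2 * n^2 * M * ‖y‖ * ‖v‖ := by simp [Finset.sum_const]; ring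

noncomputable def Lc (c : Fin n → Fin n → ℝ) (m : Fin n) (y : EuclideanSpace ℝ (Fin n)) : ℝ :=
  ∑ k, c m k * y k + ∑ j, c j m * y j

lemma QD_single (c : Fin n → Fin n → ℝ) (y : EuclideanSpace ℝ (Fin n)) (m : Fin n) :
    QD c y (EuclideanSpace.single m 1) = Lc c m y := by
  simp only [QD_apply, Lc, EuclideanSpace.single_apply, mul_ite, mul_one, mul_zero,
    Finset.sum_add_distrib, ite_mul, zero_mul]
  congr 1
  · rw [Finset.sum_comm]
    simp
  · simp

lemma Lc_le (c : Fin n → Fin n → ℝ) (M : ℝ) (hM : ∀ j k, |c j k| ≤ M)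
    (m : Fin n) (y : EuclideanSpace ℝ (Fin n)) : |Lc c m y| ≤ 2 * n * M * ‖y‖ := by
  have h1 : |∑ k, c m k * y k| ≤ n * M * ‖y‖ := by
    refine (Finset.abs_sum_le_sum_abs _ _).trans ?_
    calc (∑ k, |c m k * y k|) ≤ ∑ k : Fin n, M * ‖y‖ := by
          refine Finset.sum_le_sum fun k _ => ?_
          rw [abs_mul]
          exact mul_le_mul (hM m k) (coord_le_norm y k) (abs_nonneg _)
            ((abs_nonneg _).trans (hM m k))
      _ = n * M * ‖y‖ := by simp [Finset.sum_const]; ring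
  have h2 : |∑ j, c j m * y j| ≤ n * M * ‖y‖ := by
    refine (Finset.abs_sum_le_sum_abs _ _).trans ?_
    calc (∑ j, |c j m * y j|) ≤ ∑ j : Fin n, M * ‖y‖ := by
          refine Finset.sum_le_sum fun j _ => ?_
          rw [abs_mul]
          exact mul_le_mul (hM j m) (coord_le_norm y j) (abs_nonneg _)
            ((abs_nonneg _).trans (hM j m))
      _ = n * M * ‖y‖ := by simp [Finset.sum_const]; ring
  calc |Lc c m y| ≤ |∑ k, c m k * y k| + |∑ j, c j m * y j| := abs_add_le _ _
    _ ≤ 2 * n * M * ‖y‖ := by linarith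

noncomputable def LD (c : Fin n → Fin n → ℝ) (m : Fin n) :
    EuclideanSpace ℝ (Fin n) →L[ℝ] ℝ :=
  ∑ k, (c m k • (EuclideanSpace.proj k : EuclideanSpace ℝ (Fin n) →L[ℝ] ℝ)
      + c k m • (EuclideanSpace.proj k : EuclideanSpace ℝ (Fin n) →L[ℝ] ℝ))

lemma hasFDerivAt_Lc (c : Fin n → Fin n → ℝ) (m : Fin n) (y : EuclideanSpace ℝ (Fin n)) :
    HasFDerivAt (Lc c m) (LD c m) y := by
  have : Lc c m = fun y : EuclideanSpace ℝ (Fin n) => ∑ k, (c m k * y k + c k m * y k) := by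
    funext y
    rw [Lc, ← Finset.sum_add_distrib]
  rw [this, LD]
  apply HasFDerivAt.fun_sum
  intro k _
  have hk : HasFDerivAt (fun y : EuclideanSpace ℝ (Fin n) => y k)
      (EuclideanSpace.proj k : EuclideanSpace ℝ (Fin n) →L[ℝ] ℝ) y := by
    have := ((EuclideanSpace.proj k : EuclideanSpace ℝ (Fin n) →L[ℝ] ℝ)).hasFDerivAt (x := y)
    refine this.congr_of_eventuallyEq (Filter.Eventually.of_forall fun z => ?_)
    simp
  exact (hk.const_mul (c m k)).add (hk.const_mul (c k m))

lemma LD_norm_le (c : Fin n → Fin n → ℝ) (M : ℝ) (hM : ∀ j k, |c j k| ≤ M)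
    (m : Fin n) : ‖LD c m‖ ≤ 2 * n * M := by
  have hM0 : 0 ≤ M := (abs_nonneg _).trans (hM m m)
  refine (norm_sum_le _ _).trans ?_
  calc (∑ k, ‖c m k • (EuclideanSpace.proj k : EuclideanSpace ℝ (Fin n) →L[ℝ] ℝ)
        + c k m • (EuclideanSpace.proj k : EuclideanSpace ℝ (Fin n) →L[ℝ] ℝ)‖)
      ≤ ∑ k : Fin n, 2 * M := by
        refine Finset.sum_le_sum fun k _ => ?_
        refine (norm_add_le _ _).trans ?_
        have hp : ‖(EuclideanSpace.proj k : EuclideanSpace ℝ (Fin n) →L[ℝ] ℝ)‖ ≤ 1 := by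
          refine ContinuousLinearMap.opNorm_le_bound _ zero_le_one fun v => ?_
          simpa using coord_le_norm v k
        have h1 : ‖c m k • (EuclideanSpace.proj k : EuclideanSpace ℝ (Fin n) →L[ℝ] ℝ)‖ ≤ M := by
          refine (ContinuousLinearMap.opNorm_smul_le _ _).trans ?_
          calc ‖c m k‖ * ‖(EuclideanSpace.proj k : EuclideanSpace ℝ (Fin n) →L[ℝ] ℝ)‖
              ≤ M * 1 := mul_le_mul (hM m k) hp (norm_nonneg _) hM0
            _ = M := mul_one M
        have h2 : ‖c k m • (EuclideanSpace.proj k : EuclideanSpace ℝ (Fin n) →L[ℝ] ℝ)‖ ≤ M := by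
          refine (ContinuousLinearMap.opNorm_smul_le _ _).trans ?_
          calc ‖c k m‖ * ‖(EuclideanSpace.proj k : EuclideanSpace ℝ (Fin n) →L[ℝ] ℝ)‖
              ≤ M * 1 := mul_le_mul (hM k m) hp (norm_nonneg _) hM0
            _ = M := mul_one M
        linarith
    _ = 2 * n * M := by simp [Finset.sum_const]; ring

noncomputable def hfun (c : Fin n → Fin n → ℝ) (lam : ℝ) (m : Fin n)
    (y : EuclideanSpace ℝ (Fin n)) : ℝ :=
  -(lam * Real.exp (-Real.sqrt (Qc c y)) / (2 * Qc c y)) * Lc c m y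

lemma sqrtQ_hasFDerivAt (c : Fin n → Fin n → ℝ) (y : EuclideanSpace ℝ (Fin n))
    (hQ : 0 < Qc c y) :
    HasFDerivAt (fun z => Real.sqrt (Qc c z)) ((1 / (2 * Real.sqrt (Qc c y))) • QD c y) y :=
  (Real.hasDerivAt_sqrt hQ.ne').comp_hasFDerivAt y (hasFDerivAt_Qc c y)

lemma lw_formula_hasFDerivAt (c : Fin n → Fin n → ℝ) (lam : ℝ)
    (y : EuclideanSpace ℝ (Fin n)) (hQ : 0 < Qc c y) :
    HasFDerivAt (fun z => (1/2 : ℝ) * Real.log (Qc c z) + Fwt (Real.sqrt (Qc c z)))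
      ((Real.exp (-Real.sqrt (Qc c y)) / (2 * Qc c y)) • QD c y) y := by
  have hlog : HasFDerivAt (fun z => Real.log (Qc c z)) ((Qc c y)⁻¹ • QD c y) y :=
    (Real.hasDerivAt_log hQ.ne').comp_hasFDerivAt y (hasFDerivAt_Qc c y)
  have hFwt : HasDerivAt Fwt (gwt (Real.sqrt (Qc c y))) (Real.sqrt (Qc c y)) :=
    Fwt_hasDerivAt _
  have hF : HasFDerivAt (fun z => Fwt (Real.sqrt (Qc c z)))
      ((gwt (Real.sqrt (Qc c y))) • ((1 / (2 * Real.sqrt (Qc c y))) • QD c y)) y := by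
    have := hFwt.comp_hasFDerivAt y (sqrtQ_hasFDerivAt c y hQ)
    exact this
  have := (hlog.const_mul (1/2 : ℝ)).add hF
  refine this.congr_fderiv ?_
  have hσ : 0 < Real.sqrt (Qc c y) := Real.sqrt_pos.mpr hQ
  have hσ2 : Real.sqrt (Qc c y) ^ 2 = Qc c y := Real.sq_sqrt hQ.le
  ext v
  simp only [ContinuousLinearMap.smul_apply, ContinuousLinearMap.add_apply, smul_eq_mul]
  rw [gwt, if_neg hσ.ne']
  field_simp
  linear_combination ((QD c y) v * (1 - Real.exp (-Real.sqrt (Qc c y)))) * hσ2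



lemma ww_eq (a : Fin n → Fin n → ℝ → EuclideanSpace ℝ (Fin n) → ℝ) (t : ℝ)
    (z : EuclideanSpace ℝ (Fin n)) :
    ww a z t = phiw (Real.sqrt (Qc (fun j k => a j k t 0) z)) := rfl

lemma lw_hasFDerivAt (a : Fin n → Fin n → ℝ → EuclideanSpace ℝ (Fin n) → ℝ) (lam t : ℝ)
    (y : EuclideanSpace ℝ (Fin n))
    (hQpos : ∀ z : EuclideanSpace ℝ (Fin n), z ≠ 0 → 0 < Qc (fun j k => a j k t 0) z)
    (hy : y ≠ 0) :
    HasFDerivAt (lw a lam t)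
      ((-(lam * Real.exp (-Real.sqrt (Qc (fun j k => a j k t 0) y))
          / (2 * Qc (fun j k => a j k t 0) y))) • QD (fun j k => a j k t 0) y) y := by
  set c : Fin n → Fin n → ℝ := fun j k => a j k t 0 with hc
  have hQ := hQpos y hy
  have hbase := (lw_formula_hasFDerivAt c lam y hQ).const_mul (-lam)
  have heq : lw a lam t =ᶠ[nhds y]
      (fun z => -lam * ((1/2 : ℝ) * Real.log (Qc c z) + Fwt (Real.sqrt (Qc c z)))) := by
    filter_upwards [isOpen_compl_singleton.mem_nhds hy] with z hz
    have hz0 : z ≠ 0 := hz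
    have hQz := hQpos z hz0
    have hσ : 0 < Real.sqrt (Qc c z) := Real.sqrt_pos.mpr hQz
    rw [lw, ww_eq, phiw, Real.log_mul hσ.ne' (Real.exp_ne_zero _), Real.log_exp,
      Real.log_sqrt hQz.le]
    ring
  have := hbase.congr_of_eventuallyEq heq
  refine this.congr_fderiv ?_
  ext v
  simp only [ContinuousLinearMap.smul_apply, smul_eq_mul]
  ring

lemma pd_lw_eq (a : Fin n → Fin n → ℝ → EuclideanSpace ℝ (Fin n) → ℝ) (lam t : ℝ)
    (m : Fin n) (y : EuclideanSpace ℝ (Fin n))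
    (hQpos : ∀ z : EuclideanSpace ℝ (Fin n), z ≠ 0 → 0 < Qc (fun j k => a j k t 0) z)
    (hy : y ≠ 0) :
    pd (lw a lam t) m y = hfun (fun j k => a j k t 0) lam m y := by
  rw [pd, (lw_hasFDerivAt a lam t y hQpos hy).fderiv]
  rw [ContinuousLinearMap.smul_apply, QD_single, hfun, smul_eq_mul]


noncomputable def Ccon (n : ℕ) (M s₀ : ℝ) : ℝ :=
  2*n^3*M^2/s₀^2 + n*M/s₀ + n^3*M^2/(Real.sqrt s₀ * s₀)

lemma Ccon_pos {n : ℕ} (hn : 1 ≤ n) {M s₀ : ℝ} (hM1 : 1 ≤ M) (hs₀ : 0 < s₀) :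
    0 < Ccon n M s₀ := by
  have h1 : (1:ℝ) ≤ (n:ℝ) := by exact_mod_cast hn
  have h2 : 0 < Real.sqrt s₀ := Real.sqrt_pos.mpr hs₀
  have : 0 < (n:ℝ)*M/s₀ := by positivity
  have h3 : 0 ≤ 2*(n:ℝ)^3*M^2/s₀^2 := by positivity
  have h4 : 0 ≤ (n:ℝ)^3*M^2/(Real.sqrt s₀ * s₀) := by positivity
  rw [Ccon]; linarith

lemma hfun_deriv_bound (M s₀ : ℝ) (hM1 : 1 ≤ M) (hs₀ : 0 < s₀)
    (c : Fin n → Fin n → ℝ) (lam : ℝ) (m : Fin n) (y : EuclideanSpace ℝ (Fin n))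
    (hM : ∀ j k, |c j k| ≤ M) (hlam : 0 ≤ lam)
    (hell : s₀ * ‖y‖^2 ≤ Qc c y) (hy0 : 0 < ‖y‖) (hy1 : ‖y‖ ≤ 1) :
    DifferentiableAt ℝ (hfun c lam m) y ∧
    ‖fderiv ℝ (hfun c lam m) y‖ ≤ Ccon n M s₀ * lam / ‖y‖^2 ∧
    |hfun c lam m y| ≤ Ccon n M s₀ * lam / ‖y‖ := by
  have hM0 : (0:ℝ) ≤ M := zero_le_one.trans hM1
  have hQpos : 0 < Qc c y := lt_of_lt_of_le (by positivity) hell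
  have hσpos : 0 < Real.sqrt (Qc c y) := Real.sqrt_pos.mpr hQpos
  set s : ℝ := ‖y‖ with hs
  set Q : ℝ := Qc c y with hQdef
  set σ : ℝ := Real.sqrt Q with hσdef
  set Ex : ℝ := Real.exp (-σ) with hEdef
  set L : ℝ := Lc c m y with hLdef
  -- derivative construction
  have hexp : HasDerivAt (fun u : ℝ => Real.exp (-u)) (Real.exp (-σ) * -1) σ := by
    have h1 : HasDerivAt (fun u : ℝ => -u) (-1 : ℝ) σ := (hasDerivAt_id σ).neg
    exact (Real.hasDerivAt_exp (-σ)).comp σ h1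
  have hE : HasFDerivAt (fun z => Real.exp (-Real.sqrt (Qc c z)))
      ((Real.exp (-σ) * -1) • ((1 / (2 * σ)) • QD c y)) y :=
    by have := hexp.comp_hasFDerivAt y (sqrtQ_hasFDerivAt c y hQpos); exact this
  have hL : HasFDerivAt (Lc c m) (LD c m) y := hasFDerivAt_Lc c m y
  have hQinv : HasFDerivAt (fun z => (Qc c z)⁻¹) ((-(Q^2)⁻¹) • QD c y) y :=
    (hasDerivAt_inv hQpos.ne').comp_hasFDerivAt y (hasFDerivAt_Qc c y)
  have hEL := hE.mul hL
  have hP := hEL.mul hQinv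
  have hfull := hP.const_mul (-(lam/2))
  -- eventual equality with hfun
  have hQc_cont : Continuous (Qc c) :=
    continuous_iff_continuousAt.mpr fun z => (hasFDerivAt_Qc c z).continuousAt
  have hev : ∀ᶠ z in nhds y, 0 < Qc c z := by
    have := hQc_cont.continuousAt (x := y) (Ioi_mem_nhds hQpos)
    filter_upwards [this] with z hz using hz
  have heq : hfun c lam m =ᶠ[nhds y]
      (fun z => -(lam/2) * (Real.exp (-Real.sqrt (Qc c z)) * Lc c m z * (Qc c z)⁻¹)) := by
    filter_upwards [hev] with z hz
    rw [hfun]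
    field_simp
  have hfinal := hfull.congr_of_eventuallyEq heq
  refine ⟨hfinal.differentiableAt, ?_, ?_⟩
  · -- norm bound
    rw [hfinal.fderiv]
    have hQD : ‖QD c y‖ ≤ 2*n^2*M*s := QD_norm_le c M hM hM0 y
    have hLDb : ‖LD c m‖ ≤ 2*n*M := LD_norm_le c M hM m
    have hLb : |L| ≤ 2*n*M*s := Lc_le c M hM m y
    have hQl : s₀*s^2 ≤ Q := hell
    have hsq : Real.sqrt s₀ * s ≤ σ := by
      have : Real.sqrt (s₀ * s^2) ≤ σ := Real.sqrt_le_sqrt hQl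
      rwa [Real.sqrt_mul hs₀.le, Real.sqrt_sq hy0.le] at this
    have hsqpos : 0 < Real.sqrt s₀ := Real.sqrt_pos.mpr hs₀
    have hE1 : Ex ≤ 1 := Real.exp_le_one_iff.mpr (by simp [Real.sqrt_nonneg, hσdef])
    have hEpos : 0 < Ex := Real.exp_pos _
    have hQinvb : Q⁻¹ ≤ (s₀*s^2)⁻¹ := inv_anti₀ (by positivity) hQl
    have hQ2invb : (Q^2)⁻¹ ≤ ((s₀*s^2)^2)⁻¹ := by
      apply inv_anti₀ (by positivity)
      have h0 : 0 ≤ s₀*s^2 := by positivity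
      nlinarith
    have hσinvb : 1/(2*σ) ≤ 1/(2*(Real.sqrt s₀*s)) :=
      one_div_le_one_div_of_le (by positivity) (by linarith)
    have hQDnn : 0 ≤ ‖QD c y‖ := norm_nonneg _
    -- structural bound
    have step : ‖(-(lam/2)) • ((Ex * L) • ((-(Q^2)⁻¹) • QD c y)
        + Q⁻¹ • (Ex • LD c m + L • ((Ex * -1) • ((1/(2*σ)) • QD c y))))‖
        ≤ (lam/2) * ((|Ex| * |L|) * ((Q^2)⁻¹ * ‖QD c y‖)
          + Q⁻¹ * (Ex * ‖LD c m‖ + |L| * (Ex * ((1/(2*σ)) * ‖QD c y‖)))) := by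
      refine (ContinuousLinearMap.opNorm_smul_le _ _).trans ?_
      rw [norm_neg]
      gcongr
      · simp [abs_of_nonneg hlam]
      refine (norm_add_le _ _).trans ?_
      gcongr
      · refine (ContinuousLinearMap.opNorm_smul_le _ _).trans ?_
        rw [Real.norm_eq_abs, abs_mul]
        gcongr
        refine (ContinuousLinearMap.opNorm_smul_le _ _).trans ?_
        rw [Real.norm_eq_abs, abs_neg, abs_of_nonneg (by positivity : (0:ℝ) ≤ (Q^2)⁻¹)]
      · refine (ContinuousLinearMap.opNorm_smul_le _ _).trans ?_
        rw [Real.norm_eq_abs, abs_of_nonneg (inv_nonneg.mpr hQpos.le)]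
        gcongr
        refine (norm_add_le _ _).trans ?_
        gcongr
        · refine (ContinuousLinearMap.opNorm_smul_le _ _).trans ?_
          rw [Real.norm_eq_abs, abs_of_nonneg hEpos.le]
        · refine (ContinuousLinearMap.opNorm_smul_le _ _).trans ?_
          rw [Real.norm_eq_abs]
          have h1 : ‖(Ex * -1) • ((1/(2*σ)) • QD c y)‖ ≤ Ex * ((1/(2*σ)) * ‖QD c y‖) := by
            refine (ContinuousLinearMap.opNorm_smul_le _ _).trans ?_
            rw [Real.norm_eq_abs, abs_mul, abs_neg, abs_one, mul_one, abs_of_nonneg hEpos.le]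
            gcongr
            refine (ContinuousLinearMap.opNorm_smul_le _ _).trans ?_
            rw [Real.norm_eq_abs, abs_of_nonneg (by positivity : (0:ℝ) ≤ 1/(2*σ))]
          exact mul_le_mul_of_nonneg_left h1 (abs_nonneg _)
    refine step.trans ?_
    have hExabs : |Ex| ≤ 1 := by rw [abs_of_nonneg hEpos.le]; exact hE1
    have hstep2 : (lam/2) * ((|Ex| * |L|) * (((Q:ℝ)^2)⁻¹ * ‖QD c y‖)
          + Q⁻¹ * (Ex * ‖LD c m‖ + |L| * (Ex * ((1/(2*σ)) * ‖QD c y‖))))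
        ≤ (lam/2) * ((1 * (2*n*M*s)) * (((s₀*s^2)^2)⁻¹ * (2*n^2*M*s))
          + (s₀*s^2)⁻¹ * (1 * (2*n*M) + (2*n*M*s) * (1 * ((1/(2*(Real.sqrt s₀*s))) * (2*n^2*M*s))))) := by
      have h2Q : 0 ≤ (Q^2)⁻¹ := by positivity
      have hQi : 0 ≤ Q⁻¹ := by positivity
      have hσi : 0 ≤ 1/(2*σ) := by positivity
      gcongr <;> first
        | exact hExabs | exact hLb | exact hQ2invb | exact hQD | exact hQinvb
        | exact hE1 | exact hLDb | exact hσinvb | positivity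
    refine hstep2.trans ?_
    have hfin : (lam/2) * ((1 * (2*n*M*s)) * (((s₀*s^2)^2)⁻¹ * (2*n^2*M*s))
          + (s₀*s^2)⁻¹ * (1 * (2*n*M) + (2*n*M*s) * (1 * ((1/(2*(Real.sqrt s₀*s))) * (2*n^2*M*s)))))
        = lam/s^2 * (2*n^3*M^2/s₀^2 + n*M/s₀ + n^3*M^2*s/(Real.sqrt s₀*s₀)) := by
      have hsne : s ≠ 0 := hy0.ne'
      have hs0ne : s₀ ≠ 0 := hs₀.ne'
      have hsqne : Real.sqrt s₀ ≠ 0 := (Real.sqrt_pos.mpr hs₀).ne'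
      field_simp
      ring
    rw [hfin]
    have hCc : 2*(n:ℝ)^3*M^2/s₀^2 + n*M/s₀ + n^3*M^2*s/(Real.sqrt s₀*s₀) ≤ Ccon n M s₀ := by
      rw [Ccon]
      have hsqpos' : 0 < Real.sqrt s₀ := Real.sqrt_pos.mpr hs₀
      have : (n:ℝ)^3*M^2*s/(Real.sqrt s₀*s₀) ≤ n^3*M^2/(Real.sqrt s₀*s₀) := by
        rw [div_le_div_iff₀ (by positivity) (by positivity)]
        nlinarith [mul_nonneg (sub_nonneg.mpr hy1)
          (by positivity : (0:ℝ) ≤ (n:ℝ)^3*M^2*(Real.sqrt s₀*s₀))]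
      linarith
    calc lam/s^2 * (2*n^3*M^2/s₀^2 + n*M/s₀ + n^3*M^2*s/(Real.sqrt s₀*s₀))
        ≤ lam/s^2 * Ccon n M s₀ := by
          apply mul_le_mul_of_nonneg_left hCc (by positivity)
      _ = Ccon n M s₀ * lam / s^2 := by ring
  · -- |hfun| bound
    have hLb : |L| ≤ 2*n*M*s := Lc_le c M hM m y
    have hE1 : Ex ≤ 1 := Real.exp_le_one_iff.mpr (by simp [Real.sqrt_nonneg, hσdef])
    have hEpos : 0 < Ex := Real.exp_pos _
    have hval : |hfun c lam m y| = (lam * Ex/(2*Q)) * |L| := by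
      rw [hfun, abs_mul, abs_neg, abs_of_nonneg (by positivity : (0:ℝ) ≤ lam * Ex / (2*Q))]
    rw [hval]
    have h1 : (lam * Ex/(2*Q)) * |L| ≤ (lam * 1/(2*(s₀*s^2))) * (2*n*M*s) := by
      gcongr <;> first | exact hE1 | exact hell | exact hLb | positivity
    refine h1.trans ?_
    have he : (lam * 1/(2*(s₀*s^2))) * (2*(n:ℝ)*M*s) = (n*M/s₀) * lam / s := by
      have hsne : s ≠ 0 := hy0.ne'
      field_simp
    rw [he]
    have hCc : (n:ℝ)*M/s₀ ≤ Ccon n M s₀ := by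
      rw [Ccon]
      have hsqpos' : 0 < Real.sqrt s₀ := Real.sqrt_pos.mpr hs₀
      have h3 : 0 ≤ 2*(n:ℝ)^3*M^2/s₀^2 := by positivity
      have h4 : 0 ≤ (n:ℝ)^3*M^2/(Real.sqrt s₀ * s₀) := by positivity
      linarith
    gcongr

lemma coeff_bound (T : ℝ) (hT : 0 < T)
    (a : Fin n → Fin n → ℝ → EuclideanSpace ℝ (Fin n) → ℝ)
    (ha_smooth : ∀ j k, ContDiff ℝ 2 fun p : ℝ × EuclideanSpace ℝ (Fin n) => a j k p.1 p.2) :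
    ∃ M : ℝ, 1 ≤ M ∧ ∀ j k : Fin n, ∀ t ∈ Icc (0:ℝ) T,
      ∀ x ∈ Metric.closedBall (0 : EuclideanSpace ℝ (Fin n)) 1,
        |a j k t x| ≤ M ∧ DifferentiableAt ℝ (a j k t) x ∧ ‖fderiv ℝ (a j k t) x‖ ≤ M := by
  have hK : IsCompact ((Icc (0:ℝ) T) ×ˢ (Metric.closedBall (0 : EuclideanSpace ℝ (Fin n)) 1)) :=
    isCompact_Icc.prod (isCompact_closedBall _ _)
  have hB : ∀ jk : Fin n × Fin n, ∃ B : ℝ,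
      ∀ t ∈ Icc (0:ℝ) T, ∀ x ∈ Metric.closedBall (0 : EuclideanSpace ℝ (Fin n)) 1,
        |a jk.1 jk.2 t x| ≤ B ∧ ‖fderiv ℝ (fun p : ℝ × EuclideanSpace ℝ (Fin n) =>
          a jk.1 jk.2 p.1 p.2) (t, x)‖ ≤ B := by
    rintro ⟨j, k⟩
    have hcont : ContinuousOn (fun p : ℝ × EuclideanSpace ℝ (Fin n) =>
        |a j k p.1 p.2| + ‖fderiv ℝ (fun p : ℝ × EuclideanSpace ℝ (Fin n) => a j k p.1 p.2) p‖)
        ((Icc (0:ℝ) T) ×ˢ (Metric.closedBall (0 : EuclideanSpace ℝ (Fin n)) 1)) := by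
      apply ContinuousOn.add
      · exact ((ha_smooth j k).continuous.abs).continuousOn
      · exact (((ha_smooth j k).continuous_fderiv (by norm_num)).norm).continuousOn
    obtain ⟨B, hBb⟩ := hK.exists_bound_of_continuousOn hcont
    refine ⟨B, fun t ht x hx => ?_⟩
    have := hBb (t, x) (Set.mk_mem_prod ht hx)
    rw [Real.norm_eq_abs] at this
    have h1 : 0 ≤ |a j k t x| := abs_nonneg _
    have h2 : 0 ≤ ‖fderiv ℝ (fun p : ℝ × EuclideanSpace ℝ (Fin n) => a j k p.1 p.2) (t, x)‖ :=
      norm_nonneg _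
    have key : |a j k t x| + ‖fderiv ℝ (fun p : ℝ × EuclideanSpace ℝ (Fin n) =>
        a j k p.1 p.2) (t, x)‖ ≤ B := le_trans (le_abs_self _) this
    exact ⟨by linarith, by linarith⟩
  choose B hBspec using hB
  have hsum0 : 0 ≤ ∑ jk : Fin n × Fin n, |B jk| := Finset.sum_nonneg fun _ _ => abs_nonneg _
  refine ⟨1 + ∑ jk : Fin n × Fin n, |B jk|, by linarith, fun j k t ht x hx => ?_⟩
  have hBle : B (j, k) ≤ 1 + ∑ jk : Fin n × Fin n, |B jk| := by
    have h1 : |B (j,k)| ≤ ∑ jk : Fin n × Fin n, |B jk| :=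
      Finset.single_le_sum (f := fun jk => |B jk|) (fun _ _ => abs_nonneg _) (Finset.mem_univ _)
    calc B (j,k) ≤ |B (j,k)| := le_abs_self _
      _ ≤ 1 + ∑ jk : Fin n × Fin n, |B jk| := by linarith
  obtain ⟨hab, hfb⟩ := hBspec (j, k) t ht x hx
  -- relate spatial fderiv to joint fderiv
  have hins : HasFDerivAt (fun y : EuclideanSpace ℝ (Fin n) => ((t, y) : ℝ × EuclideanSpace ℝ (Fin n)))
      (ContinuousLinearMap.inr ℝ ℝ (EuclideanSpace ℝ (Fin n))) x :=
    hasFDerivAt_prodMk_right t x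
  have hjd : DifferentiableAt ℝ (fun p : ℝ × EuclideanSpace ℝ (Fin n) => a j k p.1 p.2) (t, x) :=
    ((ha_smooth j k).differentiable (by norm_num)).differentiableAt
  have hder : HasFDerivAt (a j k t)
      ((fderiv ℝ (fun p : ℝ × EuclideanSpace ℝ (Fin n) => a j k p.1 p.2) (t, x)).comp
        (ContinuousLinearMap.inr ℝ ℝ (EuclideanSpace ℝ (Fin n)))) x :=
    hjd.hasFDerivAt.comp x hins
  refine ⟨hab.trans hBle, hder.differentiableAt, ?_⟩
  rw [hder.fderiv]
  have hinr : ‖(ContinuousLinearMap.inr ℝ ℝ (EuclideanSpace ℝ (Fin n)))‖ ≤ 1 := by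
    refine ContinuousLinearMap.opNorm_le_bound _ zero_le_one fun v => ?_
    simp [Prod.norm_def]
  calc ‖(fderiv ℝ (fun p : ℝ × EuclideanSpace ℝ (Fin n) => a j k p.1 p.2) (t, x)).comp
        (ContinuousLinearMap.inr ℝ ℝ (EuclideanSpace ℝ (Fin n)))‖
      ≤ ‖fderiv ℝ (fun p : ℝ × EuclideanSpace ℝ (Fin n) => a j k p.1 p.2) (t, x)‖ *
        ‖(ContinuousLinearMap.inr ℝ ℝ (EuclideanSpace ℝ (Fin n)))‖ :=
        ContinuousLinearMap.opNorm_comp_le _ _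
    _ ≤ (1 + ∑ jk : Fin n × Fin n, |B jk|) * 1 := by
        apply mul_le_mul (hfb.trans hBle) hinr (norm_nonneg _) (by positivity)
    _ = 1 + ∑ jk : Fin n × Fin n, |B jk| := mul_one _

theorem stmt_8
    (n : ℕ) (hn : 1 ≤ n) (T s₀ : ℝ) (hT : 0 < T) (hs₀ : 0 < s₀)
    (a : Fin n → Fin n → ℝ → EuclideanSpace ℝ (Fin n) → ℝ)
    (ha_smooth : ∀ j k, ContDiff ℝ 2 fun p : ℝ × EuclideanSpace ℝ (Fin n) => a j k p.1 p.2)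
    (ha_symm : ∀ j k t x, a j k t x = a k j t x)
    (ha_ell : ∀ t ∈ Icc (0:ℝ) T, ∀ x ξ : EuclideanSpace ℝ (Fin n),
      s₀ * ‖ξ‖ ^ 2 ≤ ∑ j, ∑ k, a j k t x * ξ j * ξ k) :
    ∃ r : ℝ, 0 < r ∧ ∃ C : ℝ, 0 < C ∧ ∀ lam : ℝ, 1 ≤ lam → ∀ t ∈ Icc (0:ℝ) T,
      ∀ x : EuclideanSpace ℝ (Fin n), 0 < ‖x‖ → ‖x‖ ≤ r →
        |Psiw a lam t x| ≤ C * lam / (ww a x t) ^ 2 := by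
  obtain ⟨M, hM1, hMspec⟩ := coeff_bound T hT a ha_smooth
  have hM0 : (0:ℝ) ≤ M := zero_le_one.trans hM1
  have hn1 : (1:ℝ) ≤ (n:ℝ) := by exact_mod_cast hn
  have hCpos := Ccon_pos hn hM1 hs₀
  refine ⟨1, one_pos, 4*n^2*M*(Ccon n M s₀)*(n^2*M), by positivity, ?_⟩
  intro lam hlam t ht x hx0 hx1
  set c : Fin n → Fin n → ℝ := fun j k => a j k t 0 with hc
  have hxne : x ≠ 0 := norm_pos_iff.mp hx0
  have hcM : ∀ j k, |c j k| ≤ M := fun j k => (hMspec j k t ht 0 (by simp)).1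
  have hell : ∀ z : EuclideanSpace ℝ (Fin n), s₀*‖z‖^2 ≤ Qc c z := fun z => by
    have := ha_ell t ht 0 z
    simpa [Qc] using this
  have hQpos : ∀ z : EuclideanSpace ℝ (Fin n), z ≠ 0 → 0 < Qc c z := fun z hz => by
    have hz0 : 0 < ‖z‖ := norm_pos_iff.mpr hz
    exact lt_of_lt_of_le (by positivity) (hell z)
  have hlam0 : (0:ℝ) ≤ lam := zero_le_one.trans hlam
  have hterm : ∀ j k : Fin n, |pd (fun y => a j k t y * pd (lw a lam t) j y) k x|
      ≤ 2*M*(Ccon n M s₀)*lam/‖x‖^2 := by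
    intro j k
    have hev : (fun y => a j k t y * pd (lw a lam t) j y) =ᶠ[nhds x]
        (fun y => a j k t y * hfun c lam j y) := by
      filter_upwards [isOpen_compl_singleton.mem_nhds hxne] with z hz
      rw [pd_lw_eq a lam t j z hQpos hz]
    have hpd : pd (fun y => a j k t y * pd (lw a lam t) j y) k x
        = fderiv ℝ (fun y => a j k t y * hfun c lam j y) x (EuclideanSpace.single k 1) := by
      rw [pd, hev.fderiv_eq]
    obtain ⟨hdiff_h, hDb, hVb⟩ := hfun_deriv_bound M s₀ hM1 hs₀ c lam j x hcM
      hlam0 (hell x) hx0 hx1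
    obtain ⟨haM, hdiff_a, haD⟩ := hMspec j k t ht x (by simpa [Metric.mem_closedBall] using hx1)
    rw [hpd, fderiv_fun_mul hdiff_a hdiff_h, ← Real.norm_eq_abs]
    have hss : Ccon n M s₀ * lam / ‖x‖ ≤ Ccon n M s₀ * lam / ‖x‖^2 := by
      rw [div_le_div_iff₀ hx0 (by positivity)]
      nlinarith [mul_nonneg (mul_nonneg hCpos.le hlam0) (mul_nonneg hx0.le hx0.le)]
    have hsingle : ‖EuclideanSpace.single k (1:ℝ)‖ = 1 := by
      rw [EuclideanSpace.norm_single]; norm_num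
    calc ‖(a j k t x • fderiv ℝ (hfun c lam j) x
          + hfun c lam j x • fderiv ℝ (a j k t) x) (EuclideanSpace.single k 1)‖
        ≤ ‖a j k t x • fderiv ℝ (hfun c lam j) x
          + hfun c lam j x • fderiv ℝ (a j k t) x‖ * ‖EuclideanSpace.single k (1:ℝ)‖ :=
          ContinuousLinearMap.le_opNorm _ _
      _ = ‖a j k t x • fderiv ℝ (hfun c lam j) x + hfun c lam j x • fderiv ℝ (a j k t) x‖ := by
          rw [hsingle, mul_one]
      _ ≤ |a j k t x| * ‖fderiv ℝ (hfun c lam j) x‖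
          + |hfun c lam j x| * ‖fderiv ℝ (a j k t) x‖ := by
          have hA : ‖a j k t x • fderiv ℝ (hfun c lam j) x‖
              ≤ |a j k t x| * ‖fderiv ℝ (hfun c lam j) x‖ :=
            (ContinuousLinearMap.opNorm_smul_le _ _).trans_eq (by rw [Real.norm_eq_abs])
          have hB : ‖hfun c lam j x • fderiv ℝ (a j k t) x‖
              ≤ |hfun c lam j x| * ‖fderiv ℝ (a j k t) x‖ :=
            (ContinuousLinearMap.opNorm_smul_le _ _).trans_eq (by rw [Real.norm_eq_abs])
          exact (norm_add_le _ _).trans (add_le_add hA hB)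
      _ ≤ M * (Ccon n M s₀ * lam / ‖x‖^2) + (Ccon n M s₀ * lam / ‖x‖) * M := by
          gcongr <;> first | exact haM | exact hDb | exact hVb | exact haD | positivity
      _ ≤ M * (Ccon n M s₀ * lam / ‖x‖^2) + (Ccon n M s₀ * lam / ‖x‖^2) * M :=
          add_le_add le_rfl (mul_le_mul_of_nonneg_right hss hM0)
      _ = 2*M*(Ccon n M s₀)*lam/‖x‖^2 := by ring
  -- sum the terms
  have hPsi : |Psiw a lam t x| ≤ 4*n^2*M*(Ccon n M s₀)*lam/‖x‖^2 := by
    rw [Psiw]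
    calc |2 * ∑ j, ∑ k, pd (fun y => a j k t y * pd (lw a lam t) j y) k x|
        = 2 * |∑ j, ∑ k, pd (fun y => a j k t y * pd (lw a lam t) j y) k x| := by
          rw [abs_mul]; norm_num
      _ ≤ 2 * ∑ j, ∑ k, |pd (fun y => a j k t y * pd (lw a lam t) j y) k x| := by
          gcongr
          refine (Finset.abs_sum_le_sum_abs _ _).trans ?_
          exact Finset.sum_le_sum fun j _ => Finset.abs_sum_le_sum_abs _ _
      _ ≤ 2 * ∑ _j : Fin n, ∑ _k : Fin n, (2*M*(Ccon n M s₀)*lam/‖x‖^2) := by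
          gcongr with j hj k hk
          exact hterm j k
      _ = 4*n^2*M*(Ccon n M s₀)*lam/‖x‖^2 := by
          simp [Finset.sum_const]
          ring
  -- weight bound
  have hQx : 0 < Qc c x := hQpos x hxne
  have hσ : 0 < Real.sqrt (Qc c x) := Real.sqrt_pos.mpr hQx
  have hwdef : ww a x t = Real.sqrt (Qc c x) * Real.exp (Fwt (Real.sqrt (Qc c x))) := rfl
  have hwpos : 0 < ww a x t := by rw [hwdef]; positivity
  have hwle : ww a x t ≤ Real.sqrt (Qc c x) := by
    rw [hwdef]
    calc Real.sqrt (Qc c x) * Real.exp (Fwt (Real.sqrt (Qc c x)))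
        ≤ Real.sqrt (Qc c x) * 1 := by
          gcongr
          exact Real.exp_le_one_iff.mpr (Fwt_nonpos hσ.le)
      _ = Real.sqrt (Qc c x) := mul_one _
  have hQu : Qc c x ≤ n^2*M*‖x‖^2 := le_trans (le_abs_self _) (Qc_le c M hcM x)
  have hw2 : (ww a x t)^2 ≤ n^2*M*‖x‖^2 := by
    calc (ww a x t)^2 ≤ (Real.sqrt (Qc c x))^2 := pow_le_pow_left₀ hwpos.le hwle 2
      _ = Qc c x := Real.sq_sqrt hQx.le
      _ ≤ n^2*M*‖x‖^2 := hQu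
  refine hPsi.trans ?_
  rw [div_le_div_iff₀ (by positivity) (by positivity)]
  nlinarith [mul_le_mul_of_nonneg_left hw2
    (by positivity : (0:ℝ) ≤ 4*n^2*M*(Ccon n M s₀)*lam)]
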